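/- If μ is a probability measure on [0,1] and φ(u) = ∫_{(u,1]} (1/α) μ(dα), then φ is non-increasing, left-continuous off a null set, ∫₀¹ φ(u) du = 1, and ∫₀¹ F_Z^{-1}(u) φ(u) du = ∫₀¹ CVaR_α(Z) μ(dα) for any integrable random variable Z, where CVaR_α(Z) = (1/α)∫₀^α F_Z^{-1}(u) du. -/

import Mathlib

open MeasureTheory Set Filter ProbabilityTheory
open scoped Topology

noncomputable section

lemma kus_bddBelow (ν : Measure ℝ) [IsProbabilityMeasure ν] {u : ℝ} (hu0 : 0 < u) :
    BddBelow {w : ℝ | u ≤ cdf ν w} := by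
  obtain ⟨z0, hz0⟩ := ((tendsto_cdf_atBot ν).eventually (eventually_lt_nhds hu0)).exists
  refine ⟨z0, fun z hz => ?_⟩
  by_contra h
  push_neg at h
  exact absurd (le_trans hz (monotone_cdf ν h.le)) (not_le.mpr hz0)

lemma kus_le_cdf_sInf (ν : Measure ℝ) [IsProbabilityMeasure ν] {u : ℝ}
    (hu0 : 0 < u) (hu1 : u < 1) :
    u ≤ cdf ν (sInf {w : ℝ | u ≤ cdf ν w}) := by
  set S := {w : ℝ | u ≤ cdf ν w} with hSdef
  have hne : S.Nonempty := by
    obtain ⟨z, hz⟩ := ((tendsto_cdf_atTop ν).eventually (eventually_gt_nhds hu1)).exists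
    exact ⟨z, hz.le⟩
  have hbdd : BddBelow S := kus_bddBelow ν hu0
  set x := sInf S with hx
  by_contra hlt
  push_neg at hlt
  have hev : ∀ᶠ y in 𝓝[Ici x] x, cdf ν y < u :=
    ((cdf ν).right_continuous x).eventually (eventually_lt_nhds hlt)
  obtain ⟨b, hbx, hb⟩ := mem_nhdsGE_iff_exists_Ico_subset.mp hev
  have hblb : ∀ z ∈ S, b ≤ z := by
    intro z hz
    by_contra h
    push_neg at h
    have hxz : x ≤ z := csInf_le hbdd hz
    have : cdf ν z < u := hb ⟨hxz, h⟩
    exact absurd hz (not_le.mpr this)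
  have : b ≤ x := le_csInf hne hblb
  exact absurd hbx (not_lt.mpr this)

lemma kus_quantile_le_iff (ν : Measure ℝ) [IsProbabilityMeasure ν] {u : ℝ}
    (hu0 : 0 < u) (hu1 : u < 1) (z : ℝ) :
    sInf {w : ℝ | u ≤ cdf ν w} ≤ z ↔ u ≤ cdf ν z := by
  constructor
  · intro h
    exact le_trans (kus_le_cdf_sInf ν hu0 hu1) (monotone_cdf ν h)
  · intro h
    exact csInf_le (kus_bddBelow ν hu0) h

/-- Kusuoka-type identity: for a probability measure μ on (0,1] and
φ(u) = ∫_{(u,1]} (1/α) μ(dα), the spectrum φ is non-increasing, left-continuous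
off a (Lebesgue) null set, integrates to 1, and
∫₀¹ F_Z⁻¹(u) φ(u) du = ∫₀¹ CVaR_α(Z) μ(dα). -/
theorem stmt1 {Ω : Type*} [MeasurableSpace Ω] (P : Measure Ω) [IsProbabilityMeasure P]
    (Z : Ω → ℝ) (hZm : Measurable Z) (hZ : Integrable Z P)
    (μ : Measure ℝ) [IsProbabilityMeasure μ] (hsupp : μ (Set.Ioc (0:ℝ) 1)ᶜ = 0)
    (hint : IntegrableOn (fun α : ℝ => α⁻¹) (Set.Ioc (0:ℝ) 1) μ)
    (φ : ℝ → ℝ) (hφ : ∀ u, φ u = ∫ α in Set.Ioc u 1, α⁻¹ ∂μ)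
    (q : ℝ → ℝ) (hq : ∀ u, q u = sInf {z | u ≤ (P {ω | Z ω ≤ z}).toReal})
    (cvar : ℝ → ℝ) (hcvar : ∀ α, cvar α = α⁻¹ * ∫ u in Set.Ioc (0:ℝ) α, q u) :
    Antitone φ
    ∧ (∀ᵐ u ∂(volume.restrict (Set.Ioc (0:ℝ) 1)), ContinuousWithinAt φ (Set.Iio u) u)
    ∧ (∫ u in Set.Ioc (0:ℝ) 1, φ u) = 1
    ∧ (∫ u in Set.Ioc (0:ℝ) 1, q u * φ u) = ∫ α in Set.Ioc (0:ℝ) 1, cvar α ∂μ := by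
  -- setup
  set ν : Measure ℝ := P.map Z with hν
  have hνP : IsProbabilityMeasure ν := Measure.isProbabilityMeasure_map hZm.aemeasurable
  have hcdfF : ∀ z : ℝ, (P {ω | Z ω ≤ z}).toReal = cdf ν z := by
    intro z
    rw [cdf_eq_real, measureReal_def, hν, Measure.map_apply hZm measurableSet_Iic]
    rfl
  have hqq : ∀ u, q u = sInf {z : ℝ | u ≤ cdf ν z} := by
    intro u
    rw [hq]
    congr 1
    ext z
    simp only [mem_setOf_eq, hcdfF z]
  have hqz : ∀ u ∈ Ioo (0:ℝ) 1, ∀ z : ℝ, (q u ≤ z ↔ u ≤ cdf ν z) := by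
    intro u hu z
    rw [hqq]
    exact kus_quantile_le_iff ν hu.1 hu.2 z
  have hμae : ∀ᵐ α ∂μ, α ∈ Ioc (0:ℝ) 1 := by
    rw [ae_iff]
    have : {α : ℝ | ¬α ∈ Ioc (0:ℝ) 1} = (Ioc (0:ℝ) 1)ᶜ := rfl
    rw [this]
    exact hsupp
  have hM : μ.restrict (Ioc (0:ℝ) 1) = μ := Measure.restrict_eq_self_of_ae_mem hμae
  have hinv : Integrable (fun α : ℝ => α⁻¹) μ := by
    rwa [IntegrableOn, hM] at hint
  -- Part 1 : Antitone
  have hAnti : Antitone φ := by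
    intro u v huv
    rw [hφ u, hφ v]
    refine setIntegral_mono_set hinv.integrableOn ?_ ((Ioc_subset_Ioc_left huv).eventuallyLE)
    exact ae_restrict_of_ae (hμae.mono fun α hα => inv_nonneg.mpr hα.1.le)
  -- measurable version of q on (0,1)
  set g : ℝ → ℝ := fun u => if u ∈ Ioo (0:ℝ) 1 then q u else 0 with hg
  have hgq : ∀ u ∈ Ioo (0:ℝ) 1, g u = q u := fun u hu => if_pos hu
  have hg_meas : Measurable g := by
    apply measurable_of_Iic
    intro z
    have hset : g ⁻¹' Iic z =
        (Ioo 0 1 ∩ Iic (cdf ν z)) ∪ ((Ioo (0:ℝ) 1)ᶜ ∩ {_u : ℝ | (0:ℝ) ≤ z}) := by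
      ext u
      by_cases hu : u ∈ Ioo (0:ℝ) 1
      · have hgu : g u = q u := if_pos hu
        simp only [mem_preimage, mem_Iic, hgu, mem_union, mem_inter_iff, mem_compl_iff,
          mem_setOf_eq]
        rw [hqz u hu z]
        simp [hu]
      · have hgu : g u = 0 := if_neg hu
        simp only [mem_preimage, mem_Iic, hgu, mem_union, mem_inter_iff, mem_compl_iff,
          mem_setOf_eq]
        simp [hu]
    rw [hset]
    exact (measurableSet_Ioo.inter measurableSet_Iic).union
      (measurableSet_Ioo.compl.inter (MeasurableSet.const _))
  set L : Measure ℝ := volume.restrict (Ioo (0:ℝ) 1) with hL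
  have hLIoc : volume.restrict (Ioc (0:ℝ) 1) = L :=
    (Measure.restrict_congr_set Ioo_ae_eq_Ioc).symm
  have hLae : ∀ᵐ u ∂L, u ∈ Ioo (0:ℝ) 1 := ae_restrict_mem measurableSet_Ioo
  haveI := hνP
  haveI : IsFiniteMeasure L := by
    constructor
    rw [hL, Measure.restrict_apply_univ, Real.volume_Ioo]
    simp
  have hmap : L.map g = ν := by
    haveI : IsFiniteMeasure (L.map g) := Measure.isFiniteMeasure_map L g
    refine Measure.ext_of_Iic _ _ (fun z => ?_)
    rw [Measure.map_apply hg_meas measurableSet_Iic, hL,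
      Measure.restrict_apply (hg_meas measurableSet_Iic)]
    have hinter : g ⁻¹' Iic z ∩ Ioo 0 1 = Iic (cdf ν z) ∩ Ioo 0 1 := by
      ext u
      simp only [mem_inter_iff, mem_preimage, mem_Iic, and_congr_left_iff]
      intro hu
      rw [hgq u hu]
      exact hqz u hu z
    rw [hinter, ← ofReal_cdf]
    rcases lt_or_ge (cdf ν z) 1 with hc | hc
    · have heq2 : Iic (cdf ν z) ∩ Ioo 0 1 = Ioc 0 (cdf ν z) := by
        ext u
        simp only [mem_inter_iff, mem_Iic, mem_Ioo, mem_Ioc]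
        exact ⟨fun h => ⟨h.2.1, h.1⟩, fun h => ⟨h.2, h.1, lt_of_le_of_lt h.2 hc⟩⟩
      rw [heq2, Real.volume_Ioc, sub_zero]
    · have hc1 : cdf ν z = 1 := le_antisymm (cdf_le_one ν z) hc
      have heq2 : Iic (cdf ν z) ∩ Ioo 0 1 = Ioo 0 1 := by
        rw [hc1]
        ext u
        simp only [mem_inter_iff, mem_Iic, mem_Ioo]
        exact ⟨fun h => h.2, fun h => ⟨h.2.le, h⟩⟩
      rw [heq2, Real.volume_Ioo, hc1, sub_zero]
  have hqg : q =ᵐ[L] g := hLae.mono fun u hu => (hgq u hu).symm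
  have hg_int : Integrable g L := by
    have hid : Integrable (id : ℝ → ℝ) ν := by
      rw [hν]
      exact (integrable_map_measure aestronglyMeasurable_id hZm.aemeasurable).mpr hZ
    rw [← hmap] at hid
    exact (integrable_map_measure aestronglyMeasurable_id hg_meas.aemeasurable).mp hid
  refine ⟨hAnti, ?_, ?_, ?_⟩
  · -- Part 2 : a.e. left continuity
    have hcount : Set.Countable {x : ℝ | ¬ContinuousAt φ x} := hAnti.countable_not_continuousAt
    have h0 : ∀ᵐ x ∂volume, ContinuousAt φ x := by
      rw [ae_iff]
      exact hcount.measure_zero _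
    refine ae_restrict_of_ae (h0.mono fun x hx => ?_)
    exact hx.continuousWithinAt
  · -- integral of phi equals 1
    have hF3 : Integrable (Function.uncurry (fun u α : ℝ => if u < α then α⁻¹ else 0))
        (L.prod μ) := by
      have h1 : Integrable (fun p : ℝ × ℝ => (1:ℝ) * p.2⁻¹) (L.prod μ) :=
        (integrable_const 1).mul_prod hinv
      simp only [one_mul] at h1
      have heq : Function.uncurry (fun u α : ℝ => if u < α then α⁻¹ else 0)
          = {p : ℝ × ℝ | p.1 < p.2}.indicator (fun p => p.2⁻¹) := by
        ext p
        simp [Function.uncurry, Set.indicator_apply, mem_setOf_eq]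
      rw [heq]
      exact h1.indicator (measurableSet_lt measurable_fst measurable_snd)
    have hswap := integral_integral_swap hF3
    have hLHS : ∫ u, ∫ α, (if u < α then α⁻¹ else 0) ∂μ ∂L = ∫ u, φ u ∂L := by
      refine integral_congr_ae ?_
      filter_upwards [hLae] with u hu
      have hind : (fun α : ℝ => if u < α then α⁻¹ else 0)
          = (Ioi u).indicator (fun α => α⁻¹) := by
        ext α
        simp [Set.indicator_apply, mem_Ioi]
      rw [hind, integral_indicator measurableSet_Ioi, hφ u]
      refine setIntegral_congr_set (eventuallyEq_set.mpr ?_)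
      filter_upwards [hμae] with α hα
      simp only [mem_Ioi, mem_Ioc]
      exact ⟨fun h => ⟨h, hα.2⟩, fun h => h.1⟩
    have hRHS : ∫ α, ∫ u, (if u < α then α⁻¹ else 0) ∂L ∂μ = 1 := by
      have h2 : ∫ α, ∫ u, (if u < α then α⁻¹ else 0) ∂L ∂μ = ∫ _α, (1:ℝ) ∂μ := by
        refine integral_congr_ae ?_
        filter_upwards [hμae] with α hα
        have hind : (fun u : ℝ => if u < α then α⁻¹ else 0)
            = (Iio α).indicator (fun _ => α⁻¹) := by
          ext u
          simp [Set.indicator_apply, mem_Iio]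
        rw [hind, integral_indicator measurableSet_Iio, setIntegral_const, hL,
          measureReal_restrict_apply measurableSet_Iio]
        have heq3 : Iio α ∩ Ioo 0 1 = Ioo 0 α := by
          ext u
          simp only [mem_inter_iff, mem_Iio, mem_Ioo]
          exact ⟨fun h => ⟨h.2.1, h.1⟩, fun h => ⟨h.2, h.1, lt_of_lt_of_le h.2 hα.2⟩⟩
        rw [heq3, measureReal_def, Real.volume_Ioo, sub_zero, ENNReal.toReal_ofReal hα.1.le, smul_eq_mul,
          mul_inv_cancel₀ (ne_of_gt hα.1)]
      rw [h2]
      simp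
    rw [hLIoc, ← hLHS, hswap, hRHS]
  · -- Kusuoka identity
    have hF4 : Integrable (Function.uncurry (fun u α : ℝ => if u < α then g u * α⁻¹ else 0))
        (L.prod μ) := by
      have h1 : Integrable (fun p : ℝ × ℝ => g p.1 * p.2⁻¹) (L.prod μ) := hg_int.mul_prod hinv
      have heq : Function.uncurry (fun u α : ℝ => if u < α then g u * α⁻¹ else 0)
          = {p : ℝ × ℝ | p.1 < p.2}.indicator (fun p => g p.1 * p.2⁻¹) := by
        ext p
        simp [Function.uncurry, Set.indicator_apply, mem_setOf_eq]
      rw [heq]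
      exact h1.indicator (measurableSet_lt measurable_fst measurable_snd)
    have hswap := integral_integral_swap hF4
    have hLHS : ∫ u, ∫ α, (if u < α then g u * α⁻¹ else 0) ∂μ ∂L = ∫ u, q u * φ u ∂L := by
      refine integral_congr_ae ?_
      filter_upwards [hLae, hqg] with u hu hqu
      have hind : (fun α : ℝ => if u < α then g u * α⁻¹ else 0)
          = (Ioi u).indicator (fun α => g u * α⁻¹) := by
        ext α
        simp [Set.indicator_apply, mem_Ioi]
      rw [hind, integral_indicator measurableSet_Ioi, integral_const_mul, hφ u, hqu]
      congr 1
      refine setIntegral_congr_set (eventuallyEq_set.mpr ?_)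
      filter_upwards [hμae] with α hα
      simp only [mem_Ioi, mem_Ioc]
      exact ⟨fun h => ⟨h, hα.2⟩, fun h => h.1⟩
    have hRHS : ∫ α, ∫ u, (if u < α then g u * α⁻¹ else 0) ∂L ∂μ = ∫ α, cvar α ∂μ := by
      refine integral_congr_ae ?_
      filter_upwards [hμae] with α hα
      have hind : (fun u : ℝ => if u < α then g u * α⁻¹ else 0)
          = (Iio α).indicator (fun u => g u * α⁻¹) := by
        ext u
        simp [Set.indicator_apply, mem_Iio]
      rw [hind, integral_indicator measurableSet_Iio, integral_mul_const]
      have hres : L.restrict (Iio α) = volume.restrict (Ioo (0:ℝ) α) := by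
        rw [hL, Measure.restrict_restrict measurableSet_Iio]
        congr 1
        ext u
        simp only [mem_inter_iff, mem_Iio, mem_Ioo]
        exact ⟨fun h => ⟨h.2.1, h.1⟩, fun h => ⟨h.2, h.1, lt_of_lt_of_le h.2 hα.2⟩⟩
      rw [hres]
      have hgq2 : ∫ u in Ioo (0:ℝ) α, g u = ∫ u in Ioo (0:ℝ) α, q u := by
        refine integral_congr_ae ?_
        filter_upwards [ae_restrict_mem measurableSet_Ioo] with u hu
        exact hgq u ⟨hu.1, lt_of_lt_of_le hu.2 hα.2⟩
      rw [hgq2, Measure.restrict_congr_set Ioo_ae_eq_Ioc, hcvar α, mul_comm]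
    calc (∫ u in Ioc (0:ℝ) 1, q u * φ u) = ∫ u, q u * φ u ∂L := by rw [hLIoc]
      _ = ∫ α, ∫ u, (if u < α then g u * α⁻¹ else 0) ∂L ∂μ := by rw [← hLHS, hswap]
      _ = ∫ α, cvar α ∂μ := hRHS
      _ = ∫ α in Ioc (0:ℝ) 1, cvar α ∂μ := by rw [hM]
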